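/- For every positive integer m and all real sequences x₁ < ... < x_k and y₁ < ... < y_k, the determinant det[(y_j - x_i)₊^m]_{1≤i,j≤k} is nonnegative. In other words, the fractional integration kernel I_β(x,y) = (y-x)₊^(β-1) is totally positive of all orders whenever β is a positive integer. -/

import Mathlib

open Matrix Finset MeasureTheory intervalIntegral

noncomputable def tpF (m : ℕ) (x s : ℝ) : ℝ := if x < s then (s - x)^m else 0

lemma tpF_nonneg (m : ℕ) (x s : ℝ) : 0 ≤ tpF m x s := by
  unfold tpF
  split
  next h => exact pow_nonneg (by linarith) m
  next => exact le_refl 0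

lemma tpF_monotone (m : ℕ) (x : ℝ) : Monotone (tpF m x) := by
  intro s t hst
  unfold tpF
  by_cases h : x < s
  · rw [if_pos h, if_pos (lt_of_lt_of_le h hst)]
    exact pow_le_pow_left₀ (by linarith) (by linarith) m
  · rw [if_neg h]
    exact tpF_nonneg m x t |>.trans_eq (by unfold tpF; rfl)

lemma tpF_eq_max (m : ℕ) (hm : 1 ≤ m) (x s : ℝ) : tpF m x s = (max (s - x) 0)^m := by
  unfold tpF
  by_cases h : x < s
  · rw [if_pos h, max_eq_left (by linarith)]
  · rw [if_neg h, max_eq_right (by linarith [le_of_not_gt h]), zero_pow (by omega)]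

lemma tpF_continuous (m : ℕ) (hm : 1 ≤ m) (x : ℝ) : Continuous (tpF m x) := by
  have : tpF m x = fun s => (max (s - x) 0)^m := funext fun s => tpF_eq_max m hm x s
  rw [this]
  exact ((continuous_id.sub continuous_const).max continuous_const).pow m

lemma tpF_intervalIntegrable (m : ℕ) (x a b : ℝ) :
    IntervalIntegrable (tpF m x) volume a b :=
  (tpF_monotone m x).intervalIntegrable

lemma tpKeyInt (m : ℕ) (x a b : ℝ) (hab : a ≤ b) :
    ((m:ℝ)+1) * ∫ s in a..b, tpF m x s = tpF (m+1) x b - tpF (m+1) x a := by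
  cases m with
  | zero =>
    simp only [Nat.cast_zero, zero_add, one_mul]
    have hind : ∀ s, tpF 0 x s = Set.indicator (Set.Ioi x) (fun _ => (1:ℝ)) s := by
      intro s
      unfold tpF
      by_cases h : x < s
      · rw [if_pos h, pow_zero, Set.indicator_of_mem (Set.mem_Ioi.mpr h)]
      · rw [if_neg h, Set.indicator_of_notMem (by simpa using h)]
    rw [intervalIntegral.integral_congr (fun s _ => hind s)]
    rw [intervalIntegral.integral_of_le hab]
    rw [MeasureTheory.setIntegral_indicator measurableSet_Ioi]
    have : Set.Ioc a b ∩ Set.Ioi x = Set.Ioc (max a x) b := by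
      ext t
      simp only [Set.mem_inter_iff, Set.mem_Ioc, Set.mem_Ioi, Set.mem_Ioc, max_lt_iff]
      tauto
    rw [this, MeasureTheory.setIntegral_const, MeasureTheory.measureReal_def, Real.volume_Ioc, smul_eq_mul, mul_one]
    unfold tpF
    by_cases h1 : x < b
    · rw [if_pos h1, pow_one]
      by_cases h2 : x < a
      · rw [if_pos h2, pow_one, max_eq_left h2.le, ENNReal.toReal_ofReal (by linarith)]
        ring
      · rw [if_neg h2, sub_zero, max_eq_right (le_of_not_gt h2),
          ENNReal.toReal_ofReal (by linarith)]
    · have h2 : ¬ x < a := fun h2 => h1 (lt_of_lt_of_le h2 hab)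
      rw [if_neg h1, if_neg h2, sub_zero, max_eq_right (le_of_not_gt h2),
        ENNReal.ofReal_of_nonpos (by linarith [le_of_not_gt h1])]
      simp
  | succ p =>
    have hval : ∀ s : ℝ, ¬ x < s → tpF (p+1) x s = 0 := by
      intro s hs; unfold tpF; rw [if_neg hs]
    have hderiv : ∀ s : ℝ, HasDerivAt (tpF (p+1+1) x) (((p:ℝ)+2) * tpF (p+1) x s) s := by
      intro s
      rcases lt_trichotomy s x with hs | hs | hs
      · have hev : tpF (p+1+1) x =ᶠ[nhds s] fun _ => (0:ℝ) := by
          filter_upwards [Iio_mem_nhds hs] with t ht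
          unfold tpF
          rw [if_neg (not_lt.mpr (le_of_lt ht))]
        have h0 : HasDerivAt (fun _ : ℝ => (0:ℝ)) 0 s := hasDerivAt_const s 0
        have h2 := h0.congr_of_eventuallyEq hev
        have : ((p:ℝ)+2) * tpF (p+1) x s = 0 := by
          rw [hval s (not_lt.mpr hs.le), mul_zero]
        rwa [this]
      · subst hs
        have hd0 : HasDerivAt (tpF (p+1+1) s) 0 s := by
          rw [hasDerivAt_iff_tendsto_slope]
          have hslope : ∀ t ∈ ({s}ᶜ : Set ℝ), slope (tpF (p+1+1) s) s t = tpF (p+1) s t := by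
            intro t ht
            have hne : t - s ≠ 0 := sub_ne_zero.mpr ht
            rw [slope_def_field]
            unfold tpF
            rw [if_neg (lt_irrefl s)]
            by_cases h : s < t
            · rw [if_pos h, if_pos h, sub_zero, pow_succ, mul_div_assoc,
                div_self hne, mul_one]
            · rw [if_neg h, if_neg h, sub_zero, zero_div]
          rw [Filter.tendsto_congr' (Filter.eventually_of_mem self_mem_nhdsWithin hslope)]
          have hc : Filter.Tendsto (tpF (p+1) s) (nhds s) (nhds (tpF (p+1) s s)) :=
            (tpF_continuous (p+1) (by omega) s).tendsto s
          rw [hval s (lt_irrefl s)] at hc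
          exact hc.mono_left nhdsWithin_le_nhds
        have : ((p:ℝ)+2) * tpF (p+1) s s = 0 := by
          rw [hval s (lt_irrefl s), mul_zero]
        rwa [this]
      · have hd1 : HasDerivAt (fun t : ℝ => (t - x)^(p+1+1))
            (((p:ℝ)+1+1) * (s - x)^(p+1) * 1) s := by
          have h := ((hasDerivAt_id s).sub_const x).pow (p+1+1)
          simp only [id_eq, Nat.add_sub_cancel] at h
          push_cast at h
          exact h
        have hev : tpF (p+1+1) x =ᶠ[nhds s] fun t => (t - x)^(p+1+1) := by
          filter_upwards [Ioi_mem_nhds hs] with t ht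
          unfold tpF
          rw [if_pos (Set.mem_Ioi.mp ht)]
        have h2 := hd1.congr_of_eventuallyEq hev
        have : ((p:ℝ)+2) * tpF (p+1) x s = ((p:ℝ)+1+1) * (s - x)^(p+1) * 1 := by
          unfold tpF
          rw [if_pos hs]
          ring
        rwa [this]
    have hftc := intervalIntegral.integral_eq_sub_of_hasDerivAt
      (f := tpF (p+1+1) x) (f' := fun s => ((p:ℝ)+2) * tpF (p+1) x s)
      (fun s _ => hderiv s)
      (((tpF_intervalIntegrable (p+1) x a b)).const_mul ((p:ℝ)+2))
    rw [intervalIntegral.integral_const_mul] at hftc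
    have hc : ((p:ℝ)+1+1) = ((p:ℝ)+2) := by ring
    push_cast
    rw [hc]
    exact hftc

lemma tpS_det (k : ℕ) :
    (Matrix.of fun j j' : Fin k => if (j:ℕ) ≤ (j':ℕ) then (1:ℝ) else 0).det = 1 := by
  rw [Matrix.det_of_upperTriangular]
  · simp
  · intro i j hij
    have hji : (j:ℕ) < (i:ℕ) := by simpa using hij
    simp only [Matrix.of_apply]
    rw [if_neg (by omega)]

lemma tpStep (k : ℕ) (r : Fin k → ℕ) (hr : Monotone r) :
    0 ≤ (Matrix.of fun i j : Fin k => if r i ≤ (j:ℕ) then (1:ℝ) else 0).det := by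
  set D : Matrix (Fin k) (Fin k) ℝ := Matrix.of (fun i j => if (j:ℕ) = r i then 1 else 0) with hD
  have hfact : (Matrix.of fun i j : Fin k => if r i ≤ (j:ℕ) then (1:ℝ) else 0)
      = D * (Matrix.of fun j j' : Fin k => if (j:ℕ) ≤ (j':ℕ) then (1:ℝ) else 0) := by
    ext i j'
    rw [Matrix.mul_apply]
    by_cases hri : r i < k
    · rw [Finset.sum_eq_single (⟨r i, hri⟩ : Fin k)]
      · have hD1 : D i ⟨r i, hri⟩ = 1 := by simp [hD]
        rw [hD1, one_mul]
        simp only [Matrix.of_apply, Fin.val_mk]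
      · intro b _ hb
        simp only [hD, Matrix.of_apply]
        rw [if_neg fun hbv => hb (Fin.ext hbv), zero_mul]
      · simp
    · rw [Finset.sum_eq_zero, Matrix.of_apply, if_neg (by omega)]
      intro b _
      simp only [hD, Matrix.of_apply]
      rw [if_neg (by omega), zero_mul]
  rw [hfact, Matrix.det_mul, tpS_det, mul_one]
  by_cases h1 : ∀ i, r i < k
  · by_cases h2 : Function.Injective r
    · have hsm : StrictMono r := hr.strictMono_of_injective h2
      set σ : Fin k → Fin k := fun i => (⟨r i, h1 i⟩ : Fin k) with hσ
      have hsm' : StrictMono σ := fun a b hab => hsm hab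
      have hinj : Function.Injective σ := hsm'.injective
      have hbij : Function.Bijective σ := Finite.injective_iff_bijective.mp hinj
      have hrange : Set.range σ = Set.range (id : Fin k → Fin k) := by
        rw [hbij.2.range_eq, Set.range_id]
      haveI : WellFoundedLT (Fin k) := Finite.to_wellFoundedLT
      have hσid : σ = id := hsm'.range_inj strictMono_id |>.mp hrange
      have hid : ∀ i : Fin k, r i = (i : ℕ) := by
        intro i
        have := congrFun hσid i
        simpa [hσ, Fin.ext_iff] using this
      have : D = 1 := by
        ext i j
        simp only [hD, Matrix.of_apply, Matrix.one_apply, hid]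
        by_cases h : (j:ℕ) = (i:ℕ)
        · rw [if_pos h, if_pos (Fin.ext h.symm)]
        · rw [if_neg h, if_neg fun he => h (by rw [he])]
      rw [this, Matrix.det_one]
      norm_num
    · simp only [Function.Injective, not_forall] at h2
      obtain ⟨a, b, hab, hne⟩ := h2
      rw [Matrix.det_zero_of_row_eq hne (funext fun j => by simp [hD, hab])]
  · push_neg at h1
    obtain ⟨i, hi⟩ := h1
    rw [Matrix.det_eq_zero_of_row_eq_zero i]
    intro j
    simp only [hD, Matrix.of_apply]
    rw [if_neg (by omega)]

lemma tpHeaviside (k : ℕ) (x y : Fin k → ℝ) (hx : Monotone x) (hy : Monotone y) :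
    0 ≤ (Matrix.of fun i j : Fin k => if x i < y j then (1:ℝ) else 0).det := by
  set r : Fin k → ℕ := fun i => (Finset.univ.filter fun j => y j ≤ x i).card with hrdef
  have hiff : ∀ i j : Fin k, x i < y j ↔ r i ≤ (j : ℕ) := by
    intro i j
    constructor
    · intro h
      have hsub : (Finset.univ.filter fun j' => y j' ≤ x i) ⊆ Finset.Iio j := by
        intro j' hj'
        simp only [Finset.mem_filter] at hj'
        rw [Finset.mem_Iio]
        by_contra hle
        exact absurd (hy (le_of_not_gt hle)) (not_le.mpr (lt_of_le_of_lt hj'.2 h))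
      have := Finset.card_le_card hsub
      rwa [Fin.card_Iio] at this
    · intro h
      by_contra hlt
      have hsub : Finset.Iic j ⊆ (Finset.univ.filter fun j' => y j' ≤ x i) := by
        intro j' hj'
        rw [Finset.mem_Iic] at hj'
        simp only [Finset.mem_filter, Finset.mem_univ, true_and]
        exact le_trans (hy hj') (le_of_not_gt hlt)
      have hri : (j:ℕ) + 1 ≤ r i := by
        simpa [hrdef, Fin.card_Iic] using Finset.card_le_card hsub
      omega
  have hrm : Monotone r := by
    intro a b hab
    exact Finset.card_le_card (fun j' hj' => by
      simp only [Finset.mem_filter, Finset.mem_univ, true_and] at hj' ⊢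
      exact le_trans hj' (hx hab))
  have : (Matrix.of fun i j : Fin k => if x i < y j then (1:ℝ) else 0)
      = Matrix.of fun i j : Fin k => if r i ≤ (j:ℕ) then (1:ℝ) else 0 := by
    ext i j
    simp only [Matrix.of_apply]
    rw [if_congr (hiff i j) rfl rfl]
  rw [this]
  exact tpStep k r hrm

lemma tpDetUpdateIntegral (n : ℕ) (N : Matrix (Fin (n+1)) (Fin (n+1)) ℝ) (l0 : Fin (n+1))
    (g : Fin (n+1) → ℝ → ℝ) (a b : ℝ) (hint : ∀ i, IntervalIntegrable (g i) volume a b) :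
    (N.updateCol l0 (fun i => ∫ s in a..b, g i s)).det
      = ∫ s in a..b, (N.updateCol l0 (fun i => g i s)).det := by
  set e : Fin (n+1) → ℝ := fun i =>
    (-1 : ℝ)^((i:ℕ)+(l0:ℕ)) * (N.submatrix i.succAbove l0.succAbove).det with he
  have hexp : ∀ v : Fin (n+1) → ℝ, (N.updateCol l0 v).det = ∑ i, e i * v i := by
    intro v
    rw [Matrix.det_succ_column _ l0]
    apply Finset.sum_congr rfl
    intro i _
    have h1 : (N.updateCol l0 v) i l0 = v i := by
      rw [Matrix.updateCol_apply, if_pos rfl]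
    have h2 : (N.updateCol l0 v).submatrix i.succAbove l0.succAbove
        = N.submatrix i.succAbove l0.succAbove := by
      ext p q
      simp only [Matrix.submatrix_apply]
      rw [Matrix.updateCol_apply, if_neg (Fin.succAbove_ne l0 q)]
    rw [h1, h2, he]
    ring
  rw [hexp]
  have hsum : ∀ s : ℝ, (N.updateCol l0 (fun i => g i s)).det = ∑ i, e i * g i s :=
    fun s => hexp (fun i => g i s)
  rw [intervalIntegral.integral_congr (fun s _ => hsum s)]
  rw [intervalIntegral.integral_finset_sum (fun i _ => (hint i).const_mul (e i))]
  apply Finset.sum_congr rfl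
  intro i _
  rw [intervalIntegral.integral_const_mul]

lemma tpDetIntegralNonneg (k : ℕ) (g : Fin k → ℝ → ℝ) (c d : Fin k → ℝ)
    (hcd : ∀ l, c l ≤ d l)
    (hint : ∀ i (a b : ℝ), IntervalIntegrable (g i) volume a b)
    (hpos : ∀ s : Fin k → ℝ, (∀ l, s l ∈ Set.Icc (c l) (d l)) →
      0 ≤ (Matrix.of fun i l => g i (s l)).det) :
    0 ≤ (Matrix.of fun i l => ∫ t in (c l)..(d l), g i t).det := by
  rcases k with _ | n
  · simp [Matrix.det_isEmpty]
  have key : ∀ T : Finset (Fin (n+1)), ∀ s0 : Fin (n+1) → ℝ,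
      (∀ l, s0 l ∈ Set.Icc (c l) (d l)) →
      0 ≤ (Matrix.of fun i l =>
        if l ∈ T then ∫ t in (c l)..(d l), g i t else g i (s0 l)).det := by
    intro T
    induction T using Finset.induction with
    | empty =>
      intro s0 hs0
      have : (Matrix.of fun i l =>
          if l ∈ (∅ : Finset (Fin (n+1))) then ∫ t in (c l)..(d l), g i t else g i (s0 l))
          = Matrix.of fun i l => g i (s0 l) := by
        ext i l; simp
      rw [this]
      exact hpos s0 hs0
    | insert l0 T hl0 ih =>
      intro s0 hs0
      have hmat : (Matrix.of fun i l =>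
          if l ∈ insert l0 T then ∫ t in (c l)..(d l), g i t else g i (s0 l))
          = (Matrix.of fun i l =>
              if l ∈ T then ∫ t in (c l)..(d l), g i t else g i (s0 l)).updateCol l0
            (fun i => ∫ t in (c l0)..(d l0), g i t) := by
        ext i l
        rw [Matrix.updateCol_apply]
        by_cases h : l = l0
        · subst h
          rw [if_pos rfl, Matrix.of_apply, if_pos (Finset.mem_insert_self l T)]
        · rw [if_neg h, Matrix.of_apply, Matrix.of_apply]
          by_cases h2 : l ∈ T
          · rw [if_pos h2, if_pos (Finset.mem_insert_of_mem h2)]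
          · rw [if_neg h2, if_neg (by simp [Finset.mem_insert, h, h2])]
      rw [hmat, tpDetUpdateIntegral n _ l0 g (c l0) (d l0) (fun i => hint i (c l0) (d l0))]
      apply intervalIntegral.integral_nonneg (hcd l0)
      intro u hu
      have hmat2 : (Matrix.of fun i l =>
          if l ∈ T then ∫ t in (c l)..(d l), g i t else g i (s0 l)).updateCol l0
            (fun i => g i u)
          = Matrix.of fun i l =>
              if l ∈ T then ∫ t in (c l)..(d l), g i t
              else g i (Function.update s0 l0 u l) := by
        ext i l
        rw [Matrix.updateCol_apply]
        by_cases h : l = l0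
        · subst h
          rw [if_pos rfl, Matrix.of_apply, if_neg hl0, Function.update_self]
        · rw [if_neg h, Matrix.of_apply, Matrix.of_apply, Function.update_of_ne h]
      rw [hmat2]
      apply ih
      intro l
      by_cases h : l = l0
      · subst h; rw [Function.update_self]; exact hu
      · rw [Function.update_of_ne h]; exact hs0 l
  have := key Finset.univ c (fun l => ⟨le_refl _, hcd l⟩)
  have hm : (Matrix.of fun i l : Fin (n+1) =>
      if l ∈ Finset.univ then ∫ t in (c l)..(d l), g i t else g i (c l))
      = Matrix.of fun i l => ∫ t in (c l)..(d l), g i t := by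
    ext i l; simp
  rwa [hm] at this


theorem tpMain (m : ℕ) : ∀ (k : ℕ) (x y : Fin k → ℝ), Monotone x → Monotone y →
    0 ≤ (Matrix.of fun i j : Fin k => tpF m (x i) (y j)).det := by
  induction m with
  | zero =>
    intro k x y hx hy
    have : (Matrix.of fun i j : Fin k => tpF 0 (x i) (y j))
        = Matrix.of fun i j : Fin k => if x i < y j then (1:ℝ) else 0 := by
      ext i j
      simp only [Matrix.of_apply, tpF, pow_zero]
    rw [this]
    exact tpHeaviside k x y hx hy
  | succ m ih =>
    intro k x y hx hy
    rcases k with _ | n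
    · simp [Matrix.det_isEmpty]
    set a : ℝ := min (x 0) (y 0) with ha
    set c : Fin (n+1) → ℝ :=
      fun l => if h : (l:ℕ) = 0 then a else y ⟨(l:ℕ)-1, by omega⟩ with hc
    have hcd : ∀ l, c l ≤ y l := by
      intro l
      by_cases h : (l:ℕ) = 0
      · rw [hc]
        simp only [dif_pos h]
        have : l = 0 := Fin.ext (by simpa using h)
        rw [this]
        exact min_le_right _ _
      · rw [hc]
        simp only [dif_neg h]
        exact hy (by simp only [Fin.le_def, Fin.val_mk]; omega)
    have hboxmono : ∀ s : Fin (n+1) → ℝ, (∀ l, s l ∈ Set.Icc (c l) (y l)) → Monotone s := by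
      intro s hs
      intro l l' hll'
      rcases eq_or_lt_of_le hll' with h | h
      · rw [h]
      · have h1 : s l ≤ y l := (hs l).2
        have h2 : c l' ≤ s l' := (hs l').1
        have h3 : y l ≤ c l' := by
          rw [hc]
          have hl' : (l':ℕ) ≠ 0 := by
            have : (l:ℕ) < (l':ℕ) := h
            omega
          simp only [dif_neg hl']
          apply hy
          simp only [Fin.le_def, Fin.val_mk]
          have : (l:ℕ) < (l':ℕ) := h
          omega
        linarith
    set A : Matrix (Fin (n+1)) (Fin (n+1)) ℝ :=
      Matrix.of (fun i l => tpF (m+1) (x i) (y l) - tpF (m+1) (x i) (c l)) with hA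
    have hfact : (Matrix.of fun i j : Fin (n+1) => tpF (m+1) (x i) (y j))
        = A * (Matrix.of fun l j : Fin (n+1) => if (l:ℕ) ≤ (j:ℕ) then (1:ℝ) else 0) := by
      ext i j
      rw [Matrix.mul_apply]
      set z : ℕ → ℝ := fun q => if q = 0 then a else y ⟨min (q-1) n, by omega⟩ with hz
      set G : ℕ → ℝ := fun q => tpF (m+1) (x i) (z q) with hG
      have hcz : ∀ l : Fin (n+1), c l = z (l:ℕ) := by
        intro l
        rw [hc, hz]
        by_cases h : (l:ℕ) = 0
        · simp [h]
        · simp only [dif_neg h, if_neg h]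
          congr 1
          apply Fin.ext
          simp only [Fin.val_mk]
          omega
      have hyz : ∀ l : Fin (n+1), y l = z ((l:ℕ)+1) := by
        intro l
        rw [hz]
        simp only [Nat.add_sub_cancel, if_neg (Nat.succ_ne_zero _)]
        congr 1
        apply Fin.ext
        simp only [Fin.val_mk]
        omega
      have hterm : ∀ l : Fin (n+1), A i l * (Matrix.of fun l j : Fin (n+1) =>
          if (l:ℕ) ≤ (j:ℕ) then (1:ℝ) else 0) l j
          = (fun q : ℕ => if q ≤ (j:ℕ) then G (q+1) - G q else 0) (l:ℕ) := by
        intro l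
        simp only [hA, Matrix.of_apply, hG]
        rw [← hcz l, ← hyz l]
        by_cases h : (l:ℕ) ≤ (j:ℕ)
        · rw [if_pos h, if_pos h, mul_one]
        · rw [if_neg h, if_neg h, mul_zero]
      rw [Finset.sum_congr rfl (fun l _ => hterm l)]
      rw [Fin.sum_univ_eq_sum_range (fun q => if q ≤ (j:ℕ) then G (q+1) - G q else 0) (n+1)]
      rw [← Finset.sum_subset (Finset.range_subset_range.mpr (show (j:ℕ)+1 ≤ n+1 by omega))
        (fun q _ hq => if_neg (by simp at hq ⊢; omega))]
      rw [Finset.sum_congr rfl (fun q hq => if_pos (by simp at hq; omega))]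
      rw [Finset.sum_range_sub G ((j:ℕ)+1)]
      have hG0 : G 0 = 0 := by
        rw [hG, hz]
        simp only [if_pos rfl]
        unfold tpF
        rw [if_neg]
        push_neg
        exact le_trans (min_le_left _ _) (hx (Fin.zero_le i))
      rw [hG0, sub_zero]
      simp only [hG, Matrix.of_apply]
      rw [← hyz j]
    rw [hfact, Matrix.det_mul, tpS_det, mul_one]
    set B : Matrix (Fin (n+1)) (Fin (n+1)) ℝ :=
      Matrix.of (fun i l => ∫ t in (c l)..(y l), tpF m (x i) t) with hB
    have hAB : A = ((m:ℝ)+1) • B := by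
      ext i l
      simp only [hA, hB, Matrix.of_apply, Matrix.smul_apply, smul_eq_mul]
      rw [tpKeyInt m (x i) (c l) (y l) (hcd l)]
    rw [hAB, Matrix.det_smul]
    apply mul_nonneg (by positivity)
    apply tpDetIntegralNonneg (n+1) (fun i => tpF m (x i)) c y hcd
      (fun i a' b' => tpF_intervalIntegrable m (x i) a' b')
    intro s hs
    exact ih (n+1) x s hx (hboxmono s hs)

theorem fracIntKernel_nat_totally_positive (m : ℕ) (hm : 0 < m) (k : ℕ)
    (x y : Fin k → ℝ) (hx : StrictMono x) (hy : StrictMono y) :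
    0 ≤ Matrix.det (Matrix.of fun i j => (max (y j - x i) 0) ^ m) := by
  have hmat : (Matrix.of fun i j : Fin k => (max (y j - x i) 0) ^ m)
      = Matrix.of fun i j : Fin k => tpF m (x i) (y j) := by
    ext i j
    simp only [Matrix.of_apply]
    exact (tpF_eq_max m hm (x i) (y j)).symm
  rw [hmat]
  exact tpMain m k x y hx.monotone hy.monotone
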